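/- Let u be a cyclic word in F_2 whose length |u| is minimal over all cyclic words in its automorphic orbit Orb_{Aut F_2}(u), and suppose the total number m of occurrences of x_1^{±1} in u is odd. Then for τ equal to either ({x_1}, x_2) or ({x_1}, x_2^{-1}) one has |τ(u)| > |u|; consequently Λ(u) = {u} has cardinality 1. -/

import Mathlib

/-- The free group of rank `n`. -/
abbrev FG (n : ℕ) := FreeGroup (Fin n)

/-- Cyclic words in `F_n`, i.e. conjugacy classes. -/
abbrev CW (n : ℕ) := ConjClasses (FG n)

/-- The (reduced) word length of an element of the free group. -/
def wlen {n : ℕ} (g : FG n) : ℕ := g.toWord.length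

/-- The length of a cyclic word: the minimal word length over the conjugacy class. -/
noncomputable def cwLen {n : ℕ} (c : CW n) : ℕ :=
  sInf (wlen '' {g | ConjClasses.mk g = c})

/-- The automorphic orbit of a cyclic word. -/
def orb {n : ℕ} (u : CW n) : Set (CW n) :=
  {v | ∃ φ : FG n ≃* FG n, ConjClasses.map (φ : FG n →* FG n) u = v}

/-- `N(u)`: the number of cyclic words in the orbit of `u` having the same length as `u`. -/
noncomputable def Ncount {n : ℕ} (u : CW n) : ℕ :=
  Set.ncard {v | v ∈ orb u ∧ cwLen v = cwLen u}

/-- The total number of occurrences of `x_i^{±1}` in (the reduced word of) `g`. -/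
def occ {n : ℕ} (g : FG n) (i : Fin n) : ℕ := (g.toWord.map Prod.fst).count i

/-- The total number of occurrences of `x_i^{±1}` in a cyclic word, read off from a
minimal-length representative. -/
noncomputable def occCW {n : ℕ} (u : CW n) (i : Fin n) : ℕ :=
  sInf ((fun g => occ g i) '' {g | ConjClasses.mk g = u ∧ wlen g = cwLen u})

/-- Hypothesis 1.1: (i) `u` has minimal length in its automorphic orbit; (ii) if
`x_i^{±1}` and `x_j^{±1}` (`i < j`) both occur in `u`, then `x_i^{±1}` occurs strictly
fewer times than `x_j^{±1}`. -/
def Hyp {n : ℕ} (u : CW n) : Prop :=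
  (∀ v ∈ orb u, cwLen u ≤ cwLen v) ∧
  (∀ i j : Fin n, i < j → occCW u i ≠ 0 → occCW u j ≠ 0 → occCW u i < occCW u j)

/-- The element of the free group corresponding to a letter in `Σ`. -/
def lett {n : ℕ} (p : Fin n × Bool) : FG n := cond p.2 (FreeGroup.of p.1) (FreeGroup.of p.1)⁻¹

/-- The endomorphism of `F_n` determined by the Whitehead data `(A, a)`:
`x ↦ xa` if `x ∈ A, x⁻¹ ∉ A`; `x ↦ a⁻¹xa` if `x, x⁻¹ ∈ A`; `x ↦ x` otherwise. -/
def wmap {n : ℕ} (A : Finset (Fin n × Bool)) (a : Fin n × Bool) : FG n →* FG n :=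
  FreeGroup.lift (fun i =>
    if (i, true) ∈ A then
      (if (i, false) ∈ A then (lett a)⁻¹ * FreeGroup.of i * lett a
       else FreeGroup.of i * lett a)
    else
      (if (i, false) ∈ A then (lett a)⁻¹ * FreeGroup.of i
       else FreeGroup.of i))

/-- The degree of the Whitehead data `A`: the largest (1-based) index `i` such that
exactly one of `x_i, x_i⁻¹` lies in `A`, or `0` if there is no such index. -/
def wdeg {n : ℕ} (A : Finset (Fin n × Bool)) : ℕ :=
  (Finset.univ.filter (fun i : Fin n =>
      ((i, true) ∈ A ∧ (i, false) ∉ A) ∨ ((i, false) ∈ A ∧ (i, true) ∉ A))).sup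
    (fun i => (i : ℕ) + 1)

/-- A Whitehead automorphism of the second type, subject to the Section 2 convention
that the multiplier `a = x_j^{±1}` satisfies `j > deg`. -/
structure Wh (n : ℕ) where
  A : Finset (Fin n × Bool)
  a : Fin n × Bool
  mem : a ∉ A
  invMem : (a.1, !a.2) ∉ A
  conv : wdeg A ≤ (a.1 : ℕ)

def Wh.deg {n : ℕ} (σ : Wh n) : ℕ := wdeg σ.A

/-- Action of a Whitehead automorphism on cyclic words. -/
def Wh.act {n : ℕ} (σ : Wh n) (c : CW n) : CW n := ConjClasses.map (wmap σ.A σ.a) c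

/-- Apply a list of Whitehead automorphisms, leftmost first. -/
def applyList {n : ℕ} (L : List (Wh n)) (c : CW n) : CW n := L.foldl (fun c σ => σ.act c) c

/-- `Ω_k(v)`: cyclic words obtained from `v` by a nonempty composition `α_t ⋯ α_1` of
Whitehead automorphisms of the second type with `k = deg α_t ≥ ⋯ ≥ deg α_1` which
preserves the length of `v` at every stage. -/
def Omega {n : ℕ} (k : ℕ) (v : CW n) : Set (CW n) :=
  {w | ∃ L : List (Wh n), L ≠ [] ∧
        (L.map Wh.deg).Chain' (· ≤ ·) ∧
        (L.map Wh.deg).getLast? = some k ∧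
        (∀ m : ℕ, 1 ≤ m → m ≤ L.length → cwLen (applyList (L.take m) v) = cwLen v) ∧
        w = applyList L v}

/-- `M_k(v)`: the cardinality of `Ω_k(v)`. -/
noncomputable def Mcount {n : ℕ} (k : ℕ) (v : CW n) : ℕ := (Omega k v).ncard

/-- `x_k` (1-based indexing) as an element of `F_n`; junk value `1` out of range. -/
def gen (n k : ℕ) : FG n := if h : k - 1 < n then FreeGroup.of ⟨k - 1, h⟩ else 1

/-- The word `u = x_1^2 x_2 (x_2 x_n x_2⁻¹ x_n) x_2 x_3 (x_3 x_n x_3⁻¹ x_n)^2 x_3 ⋯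
x_{n-1} (x_{n-1} x_n x_{n-1}⁻¹ x_n)^{n-2} x_{n-1} x_n^ℓ` of Section 4. -/
def uWord (n ℓ : ℕ) : FG n :=
  (gen n 1) ^ 2 *
    ((List.range (n - 2)).map (fun j =>
        gen n (j + 2) *
          (gen n (j + 2) * gen n n * (gen n (j + 2))⁻¹ * gen n n) ^ (j + 1) *
          gen n (j + 2))).prod *
    (gen n n) ^ ℓ

/-- The Whitehead automorphism `({x_1}, x_2^{±1})` of `F_2` (`b = true` for `x_2`). -/
def tau2 (b : Bool) : FG 2 →* FG 2 := wmap {((0 : Fin 2), true)} ((1 : Fin 2), b)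

/-- `Λ(u)`: cyclic words of the form `τ^k(u)` where `τ` is `({x_1}, x_2)` or
`({x_1}, x_2⁻¹)` and the length of `u` is preserved at every stage. -/
def Lam (u : CW 2) : Set (CW 2) :=
  {v | ∃ b : Bool, ∃ k : ℕ, v = (ConjClasses.map (tau2 b))^[k] u ∧
        ∀ i : ℕ, 1 ≤ i → i ≤ k → cwLen ((ConjClasses.map (tau2 b))^[i] u) = cwLen u}

private lemma prodCond2 (f : Fin 2 → ZMod 2) (L : List (Fin 2 × Bool)) :
    (L.map fun x => bif x.2 then Multiplicative.ofAdd (f x.1)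
        else (Multiplicative.ofAdd (f x.1))⁻¹).prod
      = Multiplicative.ofAdd ((L.map fun x => f x.1).sum) := by
  induction L with
  | nil => rfl
  | cons a L ih =>
      have h : (Multiplicative.ofAdd (f a.1))⁻¹ = Multiplicative.ofAdd (f a.1) := by
        rw [← ofAdd_neg, CharTwo.neg_eq]
      simp only [List.map_cons, List.prod_cons, List.sum_cons, h, ih, Bool.cond_self,
        ← ofAdd_add]

private lemma lift_eq_sum (f : Fin 2 → ZMod 2) (g : FG 2) :
    FreeGroup.lift (fun i => Multiplicative.ofAdd (f i)) g
      = Multiplicative.ofAdd ((g.toWord.map fun x => f x.1).sum) := by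
  conv_lhs => rw [← FreeGroup.mk_toWord (x := g)]
  rw [FreeGroup.lift_mk, prodCond2]

/-- Exponent-sum-mod-2 homomorphism (total length parity). -/
private def phi2 : FG 2 →* Multiplicative (ZMod 2) :=
  FreeGroup.lift (fun _ => Multiplicative.ofAdd 1)

/-- Parity of the number of occurrences of `x_1`. -/
private def psi2 : FG 2 →* Multiplicative (ZMod 2) :=
  FreeGroup.lift (fun i => Multiplicative.ofAdd (if i = 0 then 1 else 0))

private lemma phi2_eq (g : FG 2) :
    phi2 g = Multiplicative.ofAdd ((wlen g : ZMod 2)) := by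
  rw [phi2, lift_eq_sum]
  congr 1
  rw [wlen]
  induction g.toWord with
  | nil => simp
  | cons a L ih => simp [ih, add_comm]

private lemma count_eq_sum (L : List (Fin 2)) :
    (L.map fun i => if i = 0 then (1 : ZMod 2) else 0).sum = (L.count 0 : ZMod 2) := by
  induction L with
  | nil => simp
  | cons a L ih =>
      by_cases h : a = 0 <;>
        simp [List.count_cons, h, ih, add_comm]

private lemma psi2_eq (g : FG 2) :
    psi2 g = Multiplicative.ofAdd ((occ g 0 : ZMod 2)) := by
  rw [psi2, lift_eq_sum]
  congr 1
  rw [occ, ← count_eq_sum, List.map_map]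
  rfl

/-- Homomorphisms to an abelian group are conjugation invariant. -/
private lemma conj_invariant (χ : FG 2 →* Multiplicative (ZMod 2)) {g g' : FG 2}
    (h : ConjClasses.mk g = ConjClasses.mk g') : χ g = χ g' := by
  rw [ConjClasses.mk_eq_mk_iff_isConj, isConj_iff] at h
  obtain ⟨c, rfl⟩ := h
  rw [map_mul, map_mul, map_inv, mul_comm (χ c) (χ g), mul_assoc]
  simp

private lemma exists_min_rep (c : CW 2) :
    ∃ g, ConjClasses.mk g = c ∧ wlen g = cwLen c := by
  have hne : (wlen '' {g | ConjClasses.mk g = c}).Nonempty := by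
    obtain ⟨g, rfl⟩ := ConjClasses.mk_surjective c
    exact ⟨wlen g, g, rfl, rfl⟩
  obtain ⟨g, hg, hw⟩ := Nat.sInf_mem hne
  exact ⟨g, hg, hw⟩

private lemma exists_occ_rep (u : CW 2) :
    ∃ g, ConjClasses.mk g = u ∧ wlen g = cwLen u ∧ occ g 0 = occCW u 0 := by
  have hne : ((fun g => occ g 0) '' {g | ConjClasses.mk g = u ∧ wlen g = cwLen u}).Nonempty := by
    obtain ⟨g, hg, hw⟩ := exists_min_rep u
    exact ⟨occ g 0, g, ⟨hg, hw⟩, rfl⟩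
  obtain ⟨g, ⟨hg, hw⟩, ho⟩ := Nat.sInf_mem hne
  exact ⟨g, hg, hw, ho⟩

private lemma tau2_of0 (b : Bool) :
    tau2 b (FreeGroup.of (0 : Fin 2)) = FreeGroup.of (0 : Fin 2) * lett ((1 : Fin 2), b) := by
  rw [tau2, wmap, FreeGroup.lift_apply_of]
  simp

private lemma tau2_of1 (b : Bool) :
    tau2 b (FreeGroup.of (1 : Fin 2)) = FreeGroup.of (1 : Fin 2) := by
  rw [tau2, wmap, FreeGroup.lift_apply_of]
  simp

private lemma tau2_comp (b : Bool) :
    (tau2 b).comp (tau2 !b) = MonoidHom.id (FG 2) := by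
  apply FreeGroup.ext_hom
  intro i
  fin_cases i
  · cases b <;>
      simp [tau2_of0, tau2_of1, lett, map_mul, mul_assoc]
  · simp [tau2_of1]

private lemma phi2_tau (b : Bool) (g : FG 2) :
    phi2 (tau2 b g) = phi2 g * psi2 g := by
  have h : phi2.comp (tau2 b) = phi2 * psi2 := by
    apply FreeGroup.ext_hom
    intro i
    fin_cases i <;> cases b <;>
      simp [phi2, psi2, tau2_of0, tau2_of1, lett, map_mul, ← ofAdd_add, ← ofAdd_neg,
        CharTwo.neg_eq]
  simpa using DFunLike.congr_fun h g

/-- If `u` has minimal length in its automorphic orbit and the number `m` of occurrences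
of `x_1^{±1}` in `u` is odd, then both `({x_1}, x_2)` and `({x_1}, x_2⁻¹)` strictly
increase the length of `u`; consequently `Λ(u) = {u}`, of cardinality `1`. -/
theorem Lam_eq_singleton_of_odd (u : CW 2)
    (hmin : ∀ v ∈ orb u, cwLen u ≤ cwLen v)
    (hodd : Odd (occCW u 0)) :
    (∀ b : Bool, cwLen u < cwLen (ConjClasses.map (tau2 b) u)) ∧
      Lam u = {u} ∧ (Lam u).ncard = 1 := by
  have hstrict : ∀ b : Bool, cwLen u < cwLen (ConjClasses.map (tau2 b) u) := by
    intro b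
    -- the inequality from minimality
    have hle : cwLen u ≤ cwLen (ConjClasses.map (tau2 b) u) := by
      apply hmin
      refine ⟨MonoidHom.toMulEquiv (tau2 b) (tau2 !b)
        (by simpa using tau2_comp (!b)) (tau2_comp b), ?_⟩
      have : ((MonoidHom.toMulEquiv (tau2 b) (tau2 !b)
          (by simpa using tau2_comp (!b)) (tau2_comp b) : FG 2 ≃* FG 2) : FG 2 →* FG 2)
          = tau2 b := by
        apply MonoidHom.ext; intro x; rfl
      rw [this]
    -- parity argument
    obtain ⟨g₀, hg₀, hw₀, ho₀⟩ := exists_occ_rep u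
    obtain ⟨g₁, hg₁, hw₁⟩ := exists_min_rep (ConjClasses.map (tau2 b) u)
    have hmk : ConjClasses.mk g₁ = ConjClasses.mk (tau2 b g₀) := by
      rw [hg₁, ← hg₀]; rfl
    have hphi : phi2 g₁ = phi2 g₀ * psi2 g₀ := by
      rw [conj_invariant phi2 hmk, phi2_tau]
    rw [phi2_eq, phi2_eq, psi2_eq, hw₀, hw₁, ho₀, ← ofAdd_add] at hphi
    have hcast : ((cwLen (ConjClasses.map (tau2 b) u) : ZMod 2))
        = (cwLen u : ZMod 2) + (occCW u 0 : ZMod 2) :=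
      Multiplicative.ofAdd.injective hphi
    have hocc1 : ((occCW u 0 : ZMod 2)) = 1 := by
      obtain ⟨k, hk⟩ := hodd
      rw [hk]
      push_cast
      rw [show (2 : ZMod 2) = 0 by decide]
      ring
    have hne : cwLen (ConjClasses.map (tau2 b) u) ≠ cwLen u := by
      intro h
      rw [h, hocc1] at hcast
      exact one_ne_zero (left_eq_add.mp hcast)
    exact lt_of_le_of_ne hle (Ne.symm hne)
  have hLam : Lam u = {u} := by
    ext v
    constructor
    · rintro ⟨b, k, rfl, hpres⟩
      cases k with
      | zero => simp
      | succ k =>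
          have h1 := hpres 1 le_rfl (by omega)
          rw [Function.iterate_one] at h1
          exact absurd h1 (hstrict b).ne'
    · rintro rfl
      exact ⟨true, 0, rfl, fun i hi hik => absurd (hi.trans hik) (by simp)⟩
  exact ⟨hstrict, hLam, by rw [hLam]; exact Set.ncard_singleton u⟩
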